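/- Let 1 < p < ∞. On the interval (0,π_p/2), the function sin_p is differentiable with sin_p′(x) = cos_p(x), the function x ↦ (cos_p(x))^{p−1} is differentiable with derivative −(p−1)·(sin_p(x))^{p−1}, and consequently u = sin_p satisfies the equation (|u′|^{p−2}u′)′(x) + (p−1)|u(x)|^{p−2}u(x) = 0 for all x ∈ (0,π_p/2), together with sin_p(0) = 0 and sin_p′(0⁺) = 1 (i.e., cos_p(0) = 1). -/

import Mathlib

/-- `arcsin_p x = ∫₀ˣ (1 - tᵖ)^(-1/p) dt`. -/
noncomputable def arcsinP (p x : ℝ) : ℝ := ∫ t in (0:ℝ)..x, (1 - t ^ p) ^ (-(1 / p))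

/-- The generalized π: `π_p = 2 arcsin_p 1`. -/
noncomputable def piP (p : ℝ) : ℝ := 2 * arcsinP p 1

/-- `sin_p` on `[0, π_p/2]`, defined as the inverse of `arcsin_p : [0,1] → [0, π_p/2]`. -/
noncomputable def sinPHalf (p : ℝ) : ℝ → ℝ := Function.invFunOn (arcsinP p) (Set.Icc 0 1)

/-- `sin_p` on `[0, π_p]`, extended by `sin_p x = sin_p (π_p - x)`. -/
noncomputable def sinP (p x : ℝ) : ℝ :=
  if x ≤ piP p / 2 then sinPHalf p x else sinPHalf p (piP p - x)

/-- `cos_p x = (1 - sin_p x ^ p)^(1/p)` on `[0, π_p/2]`, with minus sign on `[π_p/2, π_p]`. -/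
noncomputable def cosP (p x : ℝ) : ℝ :=
  if x ≤ piP p / 2 then (1 - sinP p x ^ p) ^ (1 / p)
  else -((1 - sinP p x ^ p) ^ (1 / p))

/-- `cot_p x = cos_p x / sin_p x`. -/
noncomputable def cotP (p x : ℝ) : ℝ := cosP p x / sinP p x


open Set Function

open Set Function

lemma f_meas (p : ℝ) : Measurable (fun t : ℝ => (1 - t ^ p) ^ (-(1 / p))) :=
  (measurable_const.sub (measurable_id.pow measurable_const)).pow measurable_const

lemma f_int {p : ℝ} (hp : 1 < p) :
    IntervalIntegrable (fun t : ℝ => (1 - t ^ p) ^ (-(1 / p))) MeasureTheory.volume 0 1 := by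
  have hp0 : (0:ℝ) < p := lt_trans one_pos hp
  have hdom : IntervalIntegrable (fun t : ℝ => (1 - t) ^ (-(1 / p))) MeasureTheory.volume 0 1 := by
    have h1 : (-1:ℝ) < -(1/p) := by
      have : 1/p < 1 := by rw [div_lt_one hp0]; exact hp
      linarith
    have := (intervalIntegral.intervalIntegrable_rpow' (a := 0) (b := 1) h1).comp_sub_left 1
    simpa using this.symm
  refine hdom.mono_fun ((f_meas p).aestronglyMeasurable) ?_
  refine MeasureTheory.ae_restrict_of_forall_mem measurableSet_uIoc ?_
  intro t ht
  rw [uIoc_of_le (by norm_num : (0:ℝ) ≤ 1)] at ht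
  have ht0 : 0 < t := ht.1
  have ht1 : t ≤ 1 := ht.2
  have htp : t ^ p ≤ t := by
    calc t ^ p ≤ t ^ (1:ℝ) := Real.rpow_le_rpow_of_exponent_ge ht0 ht1 hp.le
    _ = t := Real.rpow_one t
  have h1 : (0:ℝ) ≤ 1 - t ^ p := by
    have : t ^ p ≤ 1 := le_trans htp ht1
    linarith
  have h2 : 1 - t ≤ 1 - t ^ p := by linarith
  have hb : (1 - t ^ p) ^ (-(1/p)) ≤ (1 - t) ^ (-(1/p)) := by
    rcases eq_or_lt_of_le h1 with h | h
    · rw [← h, Real.zero_rpow (neg_ne_zero.2 (by positivity))]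
      exact Real.rpow_nonneg (by linarith) _
    · have h1t : 0 < 1 - t := by
        rcases ht1.lt_or_eq with h' | h'
        · linarith
        · exfalso; rw [h', Real.one_rpow] at h; linarith
      exact Real.rpow_le_rpow_of_nonpos h1t h2 (neg_nonpos_of_nonneg (by positivity))
  simp only [Real.norm_eq_abs]
  rw [abs_of_nonneg (Real.rpow_nonneg h1 _), abs_of_nonneg (Real.rpow_nonneg (by linarith) _)]
  exact hb

lemma f_int' {p : ℝ} (hp : 1 < p) {a b : ℝ} (ha : a ∈ Icc (0:ℝ) 1) (hb : b ∈ Icc (0:ℝ) 1) :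
    IntervalIntegrable (fun t : ℝ => (1 - t ^ p) ^ (-(1 / p))) MeasureTheory.volume a b :=
  (f_int hp).mono_set' (by
    rw [uIoc_of_le (by norm_num : (0:ℝ) ≤ 1), Set.uIoc]
    exact Set.Ioc_subset_Ioc (le_min ha.1 hb.1) (max_le ha.2 hb.2))

lemma arcsin_cont {p : ℝ} (hp : 1 < p) : ContinuousOn (arcsinP p) (Icc 0 1) := by
  have := intervalIntegral.continuousOn_primitive_interval'
    (μ := MeasureTheory.volume) (f_int hp) (a := 0) Set.left_mem_uIcc
  rwa [uIcc_of_le (by norm_num : (0:ℝ) ≤ 1)] at this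

lemma arcsin_zero (p : ℝ) : arcsinP p 0 = 0 := intervalIntegral.integral_same

lemma arcsin_mono {p : ℝ} (hp : 1 < p) : StrictMonoOn (arcsinP p) (Icc 0 1) := by
  have hp0 : (0:ℝ) < p := lt_trans one_pos hp
  intro a ha b hb hab
  have key : 0 < ∫ t in a..b, (1 - t ^ p) ^ (-(1 / p)) := by
    refine intervalIntegral.intervalIntegral_pos_of_pos_on (f_int' hp ha hb) ?_ hab
    intro t ht
    have ht0 : 0 < t := lt_of_le_of_lt ha.1 ht.1
    have ht1 : t < 1 := lt_of_lt_of_le ht.2 hb.2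
    have : t ^ p < 1 := Real.rpow_lt_one ht0.le ht1 hp0
    exact Real.rpow_pos_of_pos (by linarith) _
  have : arcsinP p b = arcsinP p a + ∫ t in a..b, (1 - t ^ p) ^ (-(1 / p)) := by
    rw [arcsinP, arcsinP, intervalIntegral.integral_add_adjacent_intervals
      (f_int' hp (by constructor <;> norm_num) ha) (f_int' hp ha hb)]
  linarith [this]

lemma arcsin_one_pos {p : ℝ} (hp : 1 < p) : 0 < arcsinP p 1 := by
  have := arcsin_mono hp (by constructor <;> norm_num : (0:ℝ) ∈ Icc (0:ℝ) 1)
    (by constructor <;> norm_num : (1:ℝ) ∈ Icc (0:ℝ) 1) one_pos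
  rwa [arcsin_zero] at this

lemma arcsin_hasDeriv {p : ℝ} (hp : 1 < p) {s : ℝ} (hs : s ∈ Ioo (0:ℝ) 1) :
    HasDerivAt (arcsinP p) ((1 - s ^ p) ^ (-(1 / p))) s := by
  have hp0 : (0:ℝ) < p := lt_trans one_pos hp
  have hsp : s ^ p < 1 := Real.rpow_lt_one hs.1.le hs.2 hp0
  refine intervalIntegral.integral_hasDerivAt_right
    (f_int' hp (by constructor <;> norm_num) (Ioo_subset_Icc_self hs))
    ((f_meas p).stronglyMeasurable.stronglyMeasurableAtFilter) ?_
  have h1 : ContinuousAt (fun t : ℝ => 1 - t ^ p) s :=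
    continuousAt_const.sub ((Real.continuousAt_rpow_const s p (Or.inl (ne_of_gt hs.1))))
  exact h1.rpow_const (Or.inl (ne_of_gt (by linarith : (0:ℝ) < 1 - s ^ p)))

lemma exists_pre {p : ℝ} (hp : 1 < p) {y : ℝ} (hy : y ∈ Icc 0 (arcsinP p 1)) :
    ∃ s ∈ Icc (0:ℝ) 1, arcsinP p s = y := by
  have h := intermediate_value_Icc (by norm_num : (0:ℝ) ≤ 1) (arcsin_cont hp)
  rw [arcsin_zero] at h
  obtain ⟨s, hs, hsy⟩ := h hy
  exact ⟨s, hs, hsy⟩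

lemma sinPHalf_mem {p : ℝ} (hp : 1 < p) {y : ℝ} (hy : y ∈ Icc 0 (arcsinP p 1)) :
    sinPHalf p y ∈ Icc (0:ℝ) 1 := Function.invFunOn_mem (exists_pre hp hy)

lemma arcsin_sinPHalf {p : ℝ} (hp : 1 < p) {y : ℝ} (hy : y ∈ Icc 0 (arcsinP p 1)) :
    arcsinP p (sinPHalf p y) = y := Function.invFunOn_eq (exists_pre hp hy)

lemma sinPHalf_arcsin {p : ℝ} (hp : 1 < p) {s : ℝ} (hs : s ∈ Icc (0:ℝ) 1) :
    sinPHalf p (arcsinP p s) = s := by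
  have h1 := Function.invFunOn_apply_eq (f := arcsinP p) hs
  have h2 := Function.invFunOn_apply_mem (f := arcsinP p) hs
  exact (arcsin_mono hp).injOn h2 hs h1

lemma arcsin_mapsTo {p : ℝ} (hp : 1 < p) {s : ℝ} (hs : s ∈ Icc (0:ℝ) 1) :
    arcsinP p s ∈ Icc 0 (arcsinP p 1) := by
  constructor
  · rw [← arcsin_zero p]
    exact (arcsin_mono hp).monotoneOn (by constructor <;> norm_num) hs hs.1
  · exact (arcsin_mono hp).monotoneOn hs (by constructor <;> norm_num) hs.2

lemma sinPHalf_mono {p : ℝ} (hp : 1 < p) :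
    StrictMonoOn (sinPHalf p) (Icc 0 (arcsinP p 1)) := by
  intro y1 h1 y2 h2 hlt
  by_contra hc
  push_neg at hc
  have := (arcsin_mono hp).monotoneOn (sinPHalf_mem hp h2) (sinPHalf_mem hp h1) hc
  rw [arcsin_sinPHalf hp h1, arcsin_sinPHalf hp h2] at this
  linarith

lemma sinPHalf_interior {p : ℝ} (hp : 1 < p) {x : ℝ} (hx : x ∈ Ioo 0 (arcsinP p 1)) :
    sinPHalf p x ∈ Ioo (0:ℝ) 1 := by
  have hmem := sinPHalf_mem hp (Ioo_subset_Icc_self hx)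
  have heq := arcsin_sinPHalf hp (Ioo_subset_Icc_self hx)
  constructor
  · rcases hmem.1.lt_or_eq with h | h
    · exact h
    · exfalso
      rw [← h, arcsin_zero] at heq
      exact absurd heq.symm (ne_of_gt hx.1)
  · rcases hmem.2.lt_or_eq with h | h
    · exact h
    · exfalso
      rw [h] at heq
      exact absurd heq (ne_of_gt hx.2)

lemma sinPHalf_contAt {p : ℝ} (hp : 1 < p) {x : ℝ} (hx : x ∈ Ioo 0 (arcsinP p 1)) :
    ContinuousAt (sinPHalf p) x := by
  refine (sinPHalf_mono hp).continuousAt_of_image_mem_nhds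
    (Icc_mem_nhds hx.1 hx.2) ?_
  have hsub : Icc (0:ℝ) 1 ⊆ sinPHalf p '' Icc 0 (arcsinP p 1) := by
    intro s hs
    exact ⟨arcsinP p s, arcsin_mapsTo hp hs, sinPHalf_arcsin hp hs⟩
  exact Filter.mem_of_superset
    (Icc_mem_nhds (sinPHalf_interior hp hx).1 (sinPHalf_interior hp hx).2) hsub

lemma piP_half (p : ℝ) : piP p / 2 = arcsinP p 1 := by rw [piP]; ring

lemma sinPHalf_hasDeriv {p : ℝ} (hp : 1 < p) {x : ℝ} (hx : x ∈ Ioo 0 (arcsinP p 1)) :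
    HasDerivAt (sinPHalf p) ((1 - (sinPHalf p x) ^ p) ^ (1/p)) x := by
  have hp0 : (0:ℝ) < p := lt_trans one_pos hp
  set s := sinPHalf p x with hs_def
  have hs : s ∈ Ioo (0:ℝ) 1 := sinPHalf_interior hp hx
  have hsp : s ^ p < 1 := Real.rpow_lt_one hs.1.le hs.2 hp0
  have hpos : (0:ℝ) < 1 - s ^ p := by linarith
  have hd := arcsin_hasDeriv hp hs
  have hne : (1 - s ^ p) ^ (-(1 / p)) ≠ 0 := ne_of_gt (Real.rpow_pos_of_pos hpos _)
  have hfg : ∀ᶠ y in nhds x, arcsinP p (sinPHalf p y) = y := by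
    filter_upwards [Ioo_mem_nhds hx.1 hx.2] with y hy
    exact arcsin_sinPHalf hp (Ioo_subset_Icc_self hy)
  have := hd.of_local_left_inverse (sinPHalf_contAt hp hx) hne hfg
  rwa [Real.rpow_neg hpos.le, inv_inv] at this

/-- On `(0, π_p/2)`: `sin_p' = cos_p`, `((cos_p)^(p-1))' = -(p-1)(sin_p)^(p-1)`, hence
`u = sin_p` solves `(|u'|^(p-2)u')' + (p-1)|u|^(p-2)u = 0`; moreover `sin_p 0 = 0` and
`cos_p 0 = 1` (i.e. `sin_p'(0⁺) = 1`). -/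
theorem sinP_ode (p : ℝ) (hp : 1 < p) :
    (∀ x ∈ Set.Ioo 0 (piP p / 2), HasDerivAt (sinP p) (cosP p x) x) ∧
    (∀ x ∈ Set.Ioo 0 (piP p / 2),
      HasDerivAt (fun y => cosP p y ^ (p - 1)) (-((p - 1) * sinP p x ^ (p - 1))) x) ∧
    (∀ x ∈ Set.Ioo 0 (piP p / 2),
      HasDerivAt (fun y => |cosP p y| ^ (p - 2) * cosP p y)
        (-((p - 1) * |sinP p x| ^ (p - 2) * sinP p x)) x) ∧
    sinP p 0 = 0 ∧ cosP p 0 = 1 := by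
  have hp0 : (0:ℝ) < p := lt_trans one_pos hp
  have hA : 0 < arcsinP p 1 := arcsin_one_pos hp
  -- part 1
  have P1 : ∀ x ∈ Set.Ioo 0 (piP p / 2), HasDerivAt (sinP p) (cosP p x) x := by
    intro x hx
    rw [piP_half] at hx
    have hxle : x ≤ piP p / 2 := by rw [piP_half]; exact hx.2.le
    have hev : sinP p =ᶠ[nhds x] sinPHalf p := by
      filter_upwards [Iio_mem_nhds (show x < piP p / 2 by rw [piP_half]; exact hx.2)] with y hy
      rw [sinP, if_pos (le_of_lt hy)]
    have hd := (sinPHalf_hasDeriv hp hx).congr_of_eventuallyEq hev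
    have hcos : cosP p x = (1 - sinPHalf p x ^ p) ^ (1/p) := by
      rw [cosP, if_pos hxle, sinP, if_pos hxle]
    rwa [hcos]
  -- part 2
  have P2 : ∀ x ∈ Set.Ioo 0 (piP p / 2),
      HasDerivAt (fun y => cosP p y ^ (p - 1)) (-((p - 1) * sinP p x ^ (p - 1))) x := by
    intro x hx
    rw [piP_half] at hx
    have hxle : x ≤ piP p / 2 := by rw [piP_half]; exact hx.2.le
    set s := sinPHalf p x with hs_def
    have hs : s ∈ Ioo (0:ℝ) 1 := sinPHalf_interior hp hx
    have hsp : s ^ p < 1 := Real.rpow_lt_one hs.1.le hs.2 hp0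
    have hpos : (0:ℝ) < 1 - s ^ p := by linarith
    set c := (1 - s ^ p) ^ (1/p) with hc_def
    have h1 : HasDerivAt (sinPHalf p) c x := sinPHalf_hasDeriv hp hx
    have h2 : HasDerivAt (fun y => sinPHalf p y ^ p) (c * p * s ^ (p-1)) x :=
      h1.rpow_const (Or.inl (ne_of_gt hs.1))
    have h3 : HasDerivAt (fun y => 1 - sinPHalf p y ^ p) (-(c * p * s ^ (p-1))) x :=
      h2.const_sub 1
    have h4 : HasDerivAt (fun y => (1 - sinPHalf p y ^ p) ^ ((p-1)/p))
        ((-(c * p * s ^ (p-1))) * ((p-1)/p) * (1 - s ^ p) ^ ((p-1)/p - 1)) x :=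
      h3.rpow_const (Or.inl (ne_of_gt hpos))
    have hev : (fun y => cosP p y ^ (p - 1)) =ᶠ[nhds x]
        (fun y => (1 - sinPHalf p y ^ p) ^ ((p-1)/p)) := by
      filter_upwards [Ioo_mem_nhds hx.1 hx.2] with y hy
      have hyle : y ≤ piP p / 2 := by rw [piP_half]; exact hy.2.le
      have hym := sinPHalf_mem hp (Ioo_subset_Icc_self hy)
      have hb : (0:ℝ) ≤ 1 - sinPHalf p y ^ p := by
        have : sinPHalf p y ^ p ≤ 1 := Real.rpow_le_one hym.1 hym.2 hp0.le
        linarith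
      rw [cosP, if_pos hyle, sinP, if_pos hyle, ← Real.rpow_mul hb]
      congr 1
      ring
    have hval : (-(c * p * s ^ (p-1))) * ((p-1)/p) * (1 - s ^ p) ^ ((p-1)/p - 1)
        = -((p - 1) * sinP p x ^ (p - 1)) := by
      have hX : (1 - s ^ p) ^ ((p-1)/p - 1) = (1 - s ^ p) ^ (-(1/p)) := by
        congr 1
        field_simp
        ring
      have hcx : c * (1 - s ^ p) ^ (-(1/p)) = 1 := by
        rw [hc_def, ← Real.rpow_add hpos]
        norm_num
      rw [hX, sinP, if_pos hxle, ← hs_def]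
      set X := (1 - s ^ p) ^ (-(1/p)) with hXdef
      have hkey : -(c * p * s ^ (p-1)) * ((p-1)/p) * X
          = -((p-1) * s ^ (p-1)) * (c * X) * (p * p⁻¹) := by ring
      rw [hkey, hcx, mul_inv_cancel₀ (ne_of_gt hp0), mul_one, mul_one]
    rw [← hval]
    exact h4.congr_of_eventuallyEq hev
  refine ⟨P1, P2, ?_, ?_, ?_⟩
  · -- part 3
    intro x hx
    have hx' := hx
    rw [piP_half] at hx'
    have hxle : x ≤ piP p / 2 := by rw [piP_half]; exact hx'.2.le
    have hs : sinP p x ∈ Ioo (0:ℝ) 1 := by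
      rw [sinP, if_pos hxle]; exact sinPHalf_interior hp hx'
    have hev : (fun y => |cosP p y| ^ (p - 2) * cosP p y) =ᶠ[nhds x]
        (fun y => cosP p y ^ (p - 1)) := by
      filter_upwards [Ioo_mem_nhds hx'.1 hx'.2] with y hy
      have hyle : y ≤ piP p / 2 := by rw [piP_half]; exact hy.2.le
      have hys : sinP p y ∈ Ioo (0:ℝ) 1 := by
        rw [sinP, if_pos hyle]; exact sinPHalf_interior hp hy
      have hsp : sinP p y ^ p < 1 := Real.rpow_lt_one hys.1.le hys.2 hp0
      have hcpos : 0 < cosP p y := by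
        rw [cosP, if_pos hyle]
        exact Real.rpow_pos_of_pos (by linarith) _
      rw [abs_of_pos hcpos, ← Real.rpow_add_one (ne_of_gt hcpos),
        show p - 2 + 1 = p - 1 by ring]
    have hval : -((p - 1) * |sinP p x| ^ (p - 2) * sinP p x)
        = -((p - 1) * sinP p x ^ (p - 1)) := by
      rw [abs_of_pos hs.1, mul_assoc, ← Real.rpow_add_one (ne_of_gt hs.1),
        show p - 2 + 1 = p - 1 by ring]
    rw [hval]
    exact (P2 x hx).congr_of_eventuallyEq hev
  · -- sinP 0 = 0
    have h0le : (0:ℝ) ≤ piP p / 2 := by rw [piP_half]; exact hA.le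
    have h00 : sinPHalf p 0 = 0 := by
      have := sinPHalf_arcsin hp (show (0:ℝ) ∈ Icc (0:ℝ) 1 by constructor <;> norm_num)
      rwa [arcsin_zero] at this
    rw [sinP, if_pos h0le, h00]
  · -- cosP 0 = 1
    have h0le : (0:ℝ) ≤ piP p / 2 := by rw [piP_half]; exact hA.le
    have h00 : sinPHalf p 0 = 0 := by
      have := sinPHalf_arcsin hp (show (0:ℝ) ∈ Icc (0:ℝ) 1 by constructor <;> norm_num)
      rwa [arcsin_zero] at this
    have hs0 : sinP p 0 = 0 := by rw [sinP, if_pos h0le, h00]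
    rw [cosP, if_pos h0le, hs0, Real.zero_rpow (ne_of_gt hp0), sub_zero, Real.one_rpow]
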